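/- Let F be a non-archimedean local field with residue field F_q, q odd, G = SL_2(O_F/p²), and S = {±1}·U·K₁ as above. The commutator subgroup of S equals B¹ = B ∩ K₁, the intersection of the upper triangular subgroup with the first congruence kernel. -/

import Mathlib

set_option maxHeartbeats 1000000

theorem commutator_of_nilpotent_stabilizer {O : Type*} [CommRing O] [IsDomain O]
    [IsDiscreteValuationRing O] (π : O) (hπ : Irreducible π)
    [Finite (O ⧸ Ideal.span {π})] (hodd : Odd (Nat.card (O ⧸ Ideal.span {π}))) :
    let G := Matrix.SpecialLinearGroup (Fin 2) (O ⧸ Ideal.span {π ^ 2})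
    let K1 : Subgroup G := MonoidHom.ker (Matrix.SpecialLinearGroup.map
      (Ideal.Quotient.factor (S := Ideal.span {π ^ 2}) (T := Ideal.span {π ^ 1})
        (Ideal.span_singleton_le_span_singleton.mpr (pow_dvd_pow π (by norm_num)))))
    let U : Set G := {g | (g : Matrix (Fin 2) (Fin 2) (O ⧸ Ideal.span {π ^ 2})) 0 0 = 1 ∧
      (g : Matrix (Fin 2) (Fin 2) (O ⧸ Ideal.span {π ^ 2})) 1 1 = 1 ∧
      (g : Matrix (Fin 2) (Fin 2) (O ⧸ Ideal.span {π ^ 2})) 1 0 = 0}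
    let Zpm : Set G := {g | (g : Matrix (Fin 2) (Fin 2) (O ⧸ Ideal.span {π ^ 2})) = 1 ∨
      (g : Matrix (Fin 2) (Fin 2) (O ⧸ Ideal.span {π ^ 2})) = -1}
    let S : Subgroup G := Subgroup.closure (Zpm ∪ U ∪ ↑K1)
    let B : Set G := {g | (g : Matrix (Fin 2) (Fin 2) (O ⧸ Ideal.span {π ^ 2})) 1 0 = 0}
    ⁅S, S⁆ = Subgroup.closure (B ∩ ↑K1) := by
  intro G K1 U Zpm S B
  letI : Bracket G G := commutatorElement
  set R := O ⧸ Ideal.span {π ^ 2} with hRdef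
  set κ := O ⧸ Ideal.span {π ^ 1} with hκdef
  set ρ : R →+* κ := Ideal.Quotient.factor (S := Ideal.span {π ^ 2}) (T := Ideal.span {π ^ 1})
        (Ideal.span_singleton_le_span_singleton.mpr (pow_dvd_pow π (by norm_num))) with hρdef
  -- kernel of ρ squares to zero
  have hker : ∀ x y : R, ρ x = 0 → ρ y = 0 → x * y = 0 := by
    intro x y hx hy
    obtain ⟨a, rfl⟩ := Ideal.Quotient.mk_surjective x
    obtain ⟨b, rfl⟩ := Ideal.Quotient.mk_surjective y
    rw [hρdef, Ideal.Quotient.factor_mk, Ideal.Quotient.eq_zero_iff_mem,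
      Ideal.mem_span_singleton] at hx hy
    obtain ⟨a', rfl⟩ := hx
    obtain ⟨b', rfl⟩ := hy
    have : Ideal.Quotient.mk (Ideal.span {π ^ 2}) (π ^ 1 * a' * (π ^ 1 * b')) = 0 := by
      rw [Ideal.Quotient.eq_zero_iff_mem, Ideal.mem_span_singleton]
      exact ⟨a' * b', by ring⟩
    simpa using this
  -- 2 is a unit
  have h2 : IsUnit (2 : R) := by
    have hnt : Ideal.span {π} ≠ (⊤ : Ideal O) := by
      rw [Ne, Ideal.span_singleton_eq_top]; exact hπ.not_isUnit
    haveI := Ideal.Quotient.nontrivial_iff.mpr hnt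
    have hk2 : (2 : O ⧸ Ideal.span {π}) ≠ 0 := by
      intro h
      have h2s : (2 : ℕ) • (1 : O ⧸ Ideal.span {π}) = 0 := by
        rw [nsmul_eq_mul]; simpa using h
      haveI : Fact (Nat.Prime 2) := ⟨Nat.prime_two⟩
      have ho : addOrderOf (1 : O ⧸ Ideal.span {π}) = 2 :=
        addOrderOf_eq_prime h2s one_ne_zero
      have hdvd : (2:ℕ) ∣ Nat.card (O ⧸ Ideal.span {π}) :=
        ho ▸ addOrderOf_dvd_natCard _
      rw [Nat.odd_iff] at hodd
      obtain ⟨m, hm⟩ := hdvd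
      omega
    have h2O : IsUnit (2 : O) := by
      by_contra hnu
      have hmem : (2 : O) ∈ IsLocalRing.maximalIdeal O := (IsLocalRing.mem_maximalIdeal _).mpr hnu
      rw [hπ.maximalIdeal_eq] at hmem
      exact hk2 (by
        rw [← map_ofNat (Ideal.Quotient.mk (Ideal.span {π})) 2, Ideal.Quotient.eq_zero_iff_mem]
        exact hmem)
    have h2m := IsUnit.map (Ideal.Quotient.mk (Ideal.span {π ^ 2})) h2O
    rwa [map_ofNat] at h2m
  clear hodd
  -- matrix entry helpers
  have hmul : ∀ g h : G, ∀ i j, (g * h) i j = g i 0 * h 0 j + g i 1 * h 1 j := by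
    intro g h i j
    show (↑(g * h) : Matrix (Fin 2) (Fin 2) R) i j = _
    rw [Matrix.SpecialLinearGroup.coe_mul, Matrix.mul_apply, Fin.sum_univ_two]
  have hinvc : ∀ g : G, (↑(g⁻¹) : Matrix (Fin 2) (Fin 2) R)
      = !![g 1 1, -(g 0 1); -(g 1 0), g 0 0] := by
    intro g; rw [Matrix.SpecialLinearGroup.coe_inv, Matrix.adjugate_fin_two]
  have hi00 : ∀ g : G, g⁻¹ 0 0 = g 1 1 := by
    intro g; show (↑(g⁻¹) : Matrix (Fin 2) (Fin 2) R) 0 0 = _; rw [hinvc]; simp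
  have hi01 : ∀ g : G, g⁻¹ 0 1 = -(g 0 1) := by
    intro g; show (↑(g⁻¹) : Matrix (Fin 2) (Fin 2) R) 0 1 = _; rw [hinvc]; simp
  have hi10 : ∀ g : G, g⁻¹ 1 0 = -(g 1 0) := by
    intro g; show (↑(g⁻¹) : Matrix (Fin 2) (Fin 2) R) 1 0 = _; rw [hinvc]; simp
  have hi11 : ∀ g : G, g⁻¹ 1 1 = g 0 0 := by
    intro g; show (↑(g⁻¹) : Matrix (Fin 2) (Fin 2) R) 1 1 = _; rw [hinvc]; simp
  have hdet : ∀ g : G, g 0 0 * g 1 1 - g 0 1 * g 1 0 = 1 := by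
    intro g; have := g.2; rwa [Matrix.det_fin_two] at this
  -- characterization of K1
  have hK1 : ∀ g : G, g ∈ K1 ↔
      (ρ (g 0 0) = 1 ∧ ρ (g 0 1) = 0 ∧ ρ (g 1 0) = 0 ∧ ρ (g 1 1) = 1) := by
    intro g
    have : g ∈ K1 ↔ Matrix.SpecialLinearGroup.map ρ g = 1 := Iff.rfl
    rw [this, Matrix.SpecialLinearGroup.ext_iff]
    simp only [Fin.forall_fin_two, Matrix.SpecialLinearGroup.map_apply_coe,
      RingHom.mapMatrix_apply, Matrix.map_apply, Matrix.SpecialLinearGroup.coe_one,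
      Matrix.one_fin_two, Matrix.cons_val', Matrix.cons_val_zero, Matrix.cons_val_one,
      Matrix.head_cons, Matrix.head_fin_const, Matrix.empty_val', Matrix.cons_val_fin_one]
    tauto
  -- the subgroup M
  let M : Subgroup G :=
    { carrier := {g : G | ρ (g 1 0) = 0 ∧ ρ (g 0 0) ^ 2 = 1}
      one_mem' := by
        constructor
        · show ρ (((1:G) : Matrix (Fin 2) (Fin 2) R) 1 0) = 0
          rw [Matrix.SpecialLinearGroup.coe_one]
          simp [Matrix.one_fin_two]
        · show ρ (((1:G) : Matrix (Fin 2) (Fin 2) R) 0 0) ^ 2 = 1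
          rw [Matrix.SpecialLinearGroup.coe_one]
          simp [Matrix.one_fin_two]
      mul_mem' := by
        rintro g h ⟨hg1, hg2⟩ ⟨hh1, hh2⟩
        constructor
        · show ρ ((g * h) 1 0) = 0
          rw [hmul, map_add, map_mul, map_mul, hg1, hh1, mul_zero, zero_mul, add_zero]
        · show ρ ((g * h) 0 0) ^ 2 = 1
          rw [hmul, map_add, map_mul, map_mul, hh1, mul_zero, add_zero, mul_pow, hg2, hh2,
            one_mul]
      inv_mem' := by
        rintro g ⟨hg1, hg2⟩
        constructor
        · show ρ (g⁻¹ 1 0) = 0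
          rw [hi10, map_neg, hg1, neg_zero]
        · show ρ (g⁻¹ 0 0) ^ 2 = 1
          rw [hi00]
          have e1 : ρ (g 0 0) * ρ (g 1 1) = 1 := by
            have h := congrArg ρ (hdet g)
            rw [map_sub, map_mul, map_mul, map_one, hg1, mul_zero, sub_zero] at h
            exact h
          linear_combination (ρ (g 0 0) * ρ (g 1 1) + 1) * e1 - ρ (g 1 1) ^ 2 * hg2 }
  have hMmem : ∀ g : G, g ∈ M ↔ (ρ (g 1 0) = 0 ∧ ρ (g 0 0) ^ 2 = 1) := fun g => Iff.rfl
  have hrdet : ∀ g : G, ρ (g 1 0) = 0 → ρ (g 0 0) * ρ (g 1 1) = 1 := by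
    intro g hg
    have h := congrArg ρ (hdet g)
    rw [map_sub, map_mul, map_mul, map_one, hg, mul_zero, sub_zero] at h
    exact h
  have hrd : ∀ g : G, g ∈ M → ρ (g 1 1) = ρ (g 0 0) := by
    intro g hg
    obtain ⟨hg1, hg2⟩ := (hMmem g).mp hg
    have e1 := hrdet g hg1
    linear_combination (-ρ (g 1 1)) * hg2 + ρ (g 0 0) * e1
  -- S ≤ M
  have hSM : S ≤ M := by
    have hsub : Zpm ∪ U ∪ ↑K1 ⊆ ↑M := by
      rintro g hg
      rcases hg with (hg | hg) | hg
      · rcases hg with h | h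
        · refine ⟨?_, ?_⟩
          · show ρ ((g : Matrix (Fin 2) (Fin 2) R) 1 0) = 0
            rw [h]; simp [Matrix.one_fin_two]
          · show ρ ((g : Matrix (Fin 2) (Fin 2) R) 0 0) ^ 2 = 1
            rw [h]; simp [Matrix.one_fin_two]
        · refine ⟨?_, ?_⟩
          · show ρ ((g : Matrix (Fin 2) (Fin 2) R) 1 0) = 0
            rw [h]; simp [Matrix.one_fin_two]
          · show ρ ((g : Matrix (Fin 2) (Fin 2) R) 0 0) ^ 2 = 1
            rw [h]; simp [Matrix.one_fin_two]
      · obtain ⟨h1, h2, h3⟩ := hg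
        refine ⟨?_, ?_⟩
        · show ρ ((g : Matrix (Fin 2) (Fin 2) R) 1 0) = 0
          rw [h3, map_zero]
        · show ρ ((g : Matrix (Fin 2) (Fin 2) R) 0 0) ^ 2 = 1
          rw [h1, map_one, one_pow]
      · obtain ⟨k1, k2, k3, k4⟩ := (hK1 g).mp hg
        exact ⟨k3, by rw [k1, one_pow]⟩
    exact (Subgroup.closure_le M).mpr hsub
  -- additivity of the lower-triangular functional
  have hf3 : ∀ g h : G, g ∈ M → h ∈ M →
      (g * h) 1 0 * (g * h) 1 1 = g 1 0 * g 1 1 + h 1 0 * h 1 1 := by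
    intro g h hg hh
    obtain ⟨hg1, hg2⟩ := (hMmem g).mp hg
    obtain ⟨hh1, hh2⟩ := (hMmem h).mp hh
    have hcc : g 1 0 * h 1 0 = 0 := hker _ _ hg1 hh1
    have hcc2 : g 1 0 * g 1 0 = 0 := hker _ _ hg1 hg1
    have hd2 : (g 1 1 * g 1 1 - 1) * h 1 0 = 0 := by
      refine hker _ _ ?_ hh1
      rw [map_sub, map_mul, map_one, hrd g hg]
      linear_combination hg2
    have hdeth := hdet h
    rw [hmul, hmul]
    linear_combination h 0 0 * h 0 1 * hcc2 + g 1 0 * g 1 1 * hdeth +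
      2 * h 0 1 * g 1 1 * hcc + h 1 1 * hd2
  -- additivity of the top-right functional mod π
  have hf2 : ∀ g h : G, g ∈ M → h ∈ M →
      ρ ((g * h) 0 1) * ρ ((g * h) 1 1)
        = ρ (g 0 1) * ρ (g 1 1) + ρ (h 0 1) * ρ (h 1 1) := by
    intro g h hg hh
    obtain ⟨hg1, hg2⟩ := (hMmem g).mp hg
    obtain ⟨hh1, hh2⟩ := (hMmem h).mp hh
    have e1 := hrdet g hg1
    have e2 := hrdet h hh1
    rw [hmul, hmul, map_add, map_mul, map_mul, map_add, map_mul, map_mul, hg1, zero_mul,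
      zero_add]
    linear_combination ρ (h 0 1) * ρ (h 1 1) * e1 +
      ρ (g 0 1) * ρ (g 1 1) * (ρ (h 0 0) * ρ (h 1 1) + 1) * e2 -
      ρ (g 0 1) * ρ (g 1 1) * ρ (h 1 1) ^ 2 * hh2
  -- multiplicativity of the top-left entry mod π
  have hA : ∀ g h : G, ρ (h 1 0) = 0 → ρ ((g * h) 0 0) = ρ (g 0 0) * ρ (h 0 0) := by
    intro g h hh
    rw [hmul, map_add, map_mul, map_mul, hh, mul_zero, add_zero]
  -- commutators of elements of M lie in B ∩ K1
  have key : ∀ s t : G, s ∈ M → t ∈ M → ⁅s, t⁆ ∈ B ∩ ↑K1 := by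
    intro s t hs ht
    have hs' := M.inv_mem hs
    have ht' := M.inv_mem ht
    have hst := M.mul_mem hs ht
    have hsts := M.mul_mem hst hs'
    obtain ⟨hs1, hs2⟩ := (hMmem s).mp hs
    obtain ⟨ht1, ht2⟩ := (hMmem t).mp ht
    have hc : ⁅s, t⁆ = s * t * s⁻¹ * t⁻¹ := commutatorElement_def s t
    have hcM : s * t * s⁻¹ * t⁻¹ ∈ M := M.mul_mem hsts ht'
    have ha : ρ ((s * t * s⁻¹ * t⁻¹) 0 0) = 1 := by
      rw [hA _ _ (by rw [hi10, map_neg, ht1, neg_zero]),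
          hA _ _ (by rw [hi10, map_neg, hs1, neg_zero]),
          hA _ _ ht1, hi00, hi00]
      have e1 := hrdet s hs1
      have e2 := hrdet t ht1
      linear_combination ρ (s 0 0) * ρ (s 1 1) * e2 + e1
    have hf3c : (s * t * s⁻¹ * t⁻¹) 1 0 * (s * t * s⁻¹ * t⁻¹) 1 1 = 0 := by
      rw [hf3 _ _ hsts ht', hf3 _ _ hst hs', hf3 _ _ hs ht, hi10, hi11, hi10, hi11]
      have z1 : s 1 0 * (s 1 1 - s 0 0) = 0 :=
        hker _ _ hs1 (by rw [map_sub, hrd s hs]; ring)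
      have z2 : t 1 0 * (t 1 1 - t 0 0) = 0 :=
        hker _ _ ht1 (by rw [map_sub, hrd t ht]; ring)
      linear_combination z1 + z2
    have hf2c : ρ ((s * t * s⁻¹ * t⁻¹) 0 1) * ρ ((s * t * s⁻¹ * t⁻¹) 1 1) = 0 := by
      rw [hf2 _ _ hsts ht', hf2 _ _ hst hs', hf2 _ _ hs ht, hi01, hi11, hi01, hi11,
        map_neg, map_neg]
      have z1 : ρ (s 1 1) = ρ (s 0 0) := hrd s hs
      have z2 : ρ (t 1 1) = ρ (t 0 0) := hrd t ht
      linear_combination ρ (s 0 1) * z1 + ρ (t 0 1) * z2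
    have hc11 : ρ ((s * t * s⁻¹ * t⁻¹) 1 1) = 1 := by
      have h := hrdet _ ((hMmem _).mp hcM).1
      rw [ha, one_mul] at h
      exact h
    have hc01 : ρ ((s * t * s⁻¹ * t⁻¹) 0 1) = 0 := by
      rw [hc11, mul_one] at hf2c
      exact hf2c
    have hc10 : (s * t * s⁻¹ * t⁻¹) 1 0 = 0 := by
      have hn : ρ ((s * t * s⁻¹ * t⁻¹) 1 1 - 1) = 0 := by
        rw [map_sub, hc11, map_one, sub_self]
      have hnn := hker _ _ hn hn
      have h1 : (s * t * s⁻¹ * t⁻¹) 1 1 * (2 - (s * t * s⁻¹ * t⁻¹) 1 1) = 1 := by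
        linear_combination -hnn
      linear_combination (2 - (s * t * s⁻¹ * t⁻¹) 1 1) * hf3c -
        (s * t * s⁻¹ * t⁻¹) 1 0 * h1
    refine ⟨?_, ?_⟩
    · show (((⁅s, t⁆ : G)) : Matrix (Fin 2) (Fin 2) R) 1 0 = 0
      rw [hc]; exact hc10
    · refine (hK1 ⁅s, t⁆).mpr ?_
      rw [hc]
      exact ⟨ha, hc01, by rw [hc10, map_zero], hc11⟩
  have dir1 : ⁅S, S⁆ ≤ Subgroup.closure (B ∩ ↑K1) :=
    Subgroup.commutator_le.mpr fun s hs t ht =>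
      Subgroup.subset_closure (key s t (hSM hs) (hSM ht))
  have dir2 : Subgroup.closure (B ∩ ↑K1) ≤ ⁅S, S⁆ := by
    rw [Subgroup.closure_le]
    rintro g ⟨hgB, hgK⟩
    obtain ⟨k1, k2, k3, k4⟩ := (hK1 g).mp hgK
    have hg10 : (g : Matrix (Fin 2) (Fin 2) R) 1 0 = 0 := hgB
    obtain ⟨v, hv⟩ := h2
    set η : R := ↑v⁻¹ with hηdef
    have hη : 2 * η = 1 := by rw [hηdef, ← hv]; exact v.mul_inv
    set α : R := g 0 0 - 1 with hαdef
    set β : R := g 0 1 with hβdef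
    have hρα : ρ α = 0 := by rw [hαdef, map_sub, k1, map_one, sub_self]
    have hρβ : ρ β = 0 := by rw [hβdef]; exact k2
    have hαα : α * α = 0 := hker _ _ hρα hρα
    have hαβ : α * β = 0 := hker _ _ hρα hρβ
    have hββ : β * β = 0 := hker _ _ hρβ hρβ
    have hg00 : g 0 0 = 1 + α := by rw [hαdef]; ring
    have hdg := hdet g
    rw [hg10, mul_zero, sub_zero] at hdg
    have hg11 : g 1 1 = 1 - α := by
      rw [hg00] at hdg
      linear_combination (1 - α) * hdg + g 1 1 * hαα
    have hβα : ρ (β + α) = 0 := by rw [map_add, hρα, hρβ, add_zero]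
    set e : R := 1 - η * (β + α) with hedef
    set e' : R := 1 + η * (β + α) with hepdef
    have hee' : e * e' = 1 := by
      rw [hedef, hepdef]
      linear_combination (-(η^2)) * hββ - 2*η^2 * hαβ - η^2 * hαα
    have hρe : ρ e = 1 := by rw [hedef, map_sub, map_one, map_mul, hβα, mul_zero, sub_zero]
    have hρe' : ρ e' = 1 := by rw [hepdef, map_add, map_one, map_mul, hβα, mul_zero, add_zero]
    set u : G := ⟨!![1, 1; 0, 1], by rw [Matrix.det_fin_two_of]; ring⟩ with hudef
    set w : G := ⟨!![1, 0; α, 1], by rw [Matrix.det_fin_two_of]; ring⟩ with hwdef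
    set z : G := ⟨!![e, 0; 0, e'], by rw [Matrix.det_fin_two_of]; linear_combination hee'⟩
      with hzdef
    have u00 : u 0 0 = 1 := rfl
    have u01 : u 0 1 = 1 := rfl
    have u10 : u 1 0 = 0 := rfl
    have u11 : u 1 1 = 1 := rfl
    have w00 : w 0 0 = 1 := rfl
    have w01 : w 0 1 = 0 := rfl
    have w10 : w 1 0 = α := rfl
    have w11 : w 1 1 = 1 := rfl
    have z00 : z 0 0 = e := rfl
    have z01 : z 0 1 = 0 := rfl
    have z10 : z 1 0 = 0 := rfl
    have z11 : z 1 1 = e' := rfl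
    have hu : u ∈ S := Subgroup.subset_closure (Or.inl (Or.inr ⟨u00, u11, u10⟩))
    have hw : w ∈ S := by
      refine Subgroup.subset_closure (Or.inr ((hK1 w).mpr ?_))
      refine ⟨?_, ?_, ?_, ?_⟩
      · rw [w00, map_one]
      · rw [w01, map_zero]
      · rw [w10]; exact hρα
      · rw [w11, map_one]
    have hz : z ∈ S := by
      refine Subgroup.subset_closure (Or.inr ((hK1 z).mpr ?_))
      refine ⟨?_, ?_, ?_, ?_⟩
      · rw [z00]; exact hρe
      · rw [z01, map_zero]
      · rw [z10, map_zero]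
      · rw [z11]; exact hρe'
    have cui : (↑(u⁻¹) : Matrix (Fin 2) (Fin 2) R) = !![1, -1; 0, 1] := by
      rw [hinvc, u00, u01, u10, u11, neg_zero]
    have cwi : (↑(w⁻¹) : Matrix (Fin 2) (Fin 2) R) = !![1, 0; -α, 1] := by
      rw [hinvc, w00, w01, w10, w11, neg_zero]
    have czi : (↑(z⁻¹) : Matrix (Fin 2) (Fin 2) R) = !![e', 0; 0, e] := by
      rw [hinvc, z00, z01, z10, z11, neg_zero]
    have hgeq : g = ⁅u, w⁆ * ⁅u, z⁆ := by
      have hcoe : (↑(⁅u, w⁆ * ⁅u, z⁆) : Matrix (Fin 2) (Fin 2) R)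
          = (!![1,1;0,1] * !![1,0;α,1] * !![1,-1;0,1] * !![1,0;-α,1]) *
            (!![1,1;0,1] * !![e,0;0,e'] * !![1,-1;0,1] * !![e',0;0,e]) := by
        rw [commutatorElement_def, commutatorElement_def, Matrix.SpecialLinearGroup.coe_mul,
          Matrix.SpecialLinearGroup.coe_mul, Matrix.SpecialLinearGroup.coe_mul,
          Matrix.SpecialLinearGroup.coe_mul, Matrix.SpecialLinearGroup.coe_mul,
          Matrix.SpecialLinearGroup.coe_mul, Matrix.SpecialLinearGroup.coe_mul,
          cui, cwi, czi]
      apply Subtype.coe_injective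
      show (↑g : Matrix (Fin 2) (Fin 2) R) = (↑(⁅u, w⁆ * ⁅u, z⁆) : Matrix (Fin 2) (Fin 2) R)
      rw [hcoe, Matrix.eta_fin_two (g : Matrix (Fin 2) (Fin 2) R), hg00, hg10, hg11, ← hβdef]
      simp only [Matrix.mul_fin_two]
      rw [← Matrix.ext_iff]
      simp only [Fin.forall_fin_two, Matrix.cons_val', Matrix.cons_val_zero,
        Matrix.cons_val_one, Matrix.head_cons, Matrix.head_fin_const, Matrix.empty_val',
        Matrix.cons_val_fin_one, Matrix.of_apply]
      refine ⟨⟨?_, ?_⟩, ?_, ?_⟩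
      · linear_combination (-1 + (1+α+α*α)*η^2) * hαα + 2*(1+α+α*α)*η^2 * hαβ +
          (1+α+α*α)*η^2 * hββ
      · linear_combination (-(1+α) + η^2*(2+α+2*α*α)) * hαα +
          (-(1+α) + 2*η^2*(2+α+2*α*α)) * hαβ + η^2*(2+α+2*α*α) * hββ +
          (-(β+α)*(1+α+α*α)) * hη
      · linear_combination (-1 + η^2*(α+β)^2) * hαα
      · linear_combination (-2*η*(α+β) + 2*η^2*(α+β)^2 + η^2*(1-α)) * hαα +
          2*η^2*(1-α) * hαβ + η^2*(1-α) * hββ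
    rw [hgeq]
    exact Subgroup.mul_mem _ (Subgroup.commutator_mem_commutator hu hw)
      (Subgroup.commutator_mem_commutator hu hz)
  exact le_antisymm dir1 dir2
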